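/- Given a complete set of d+1 mutually unbiased bases of ℂ^d, the subspaces W_a = { Σ_b r_b |ψ^a_b⟩⟨ψ^a_b| : r_b ∈ ℝ, Σ_b r_b = 0 } for a = 0,…,d are pairwise orthogonal (with respect to the Hilbert–Schmidt inner product) and their direct sum is the space W of all traceless Hermitian operators on ℂ^d. -/

import Mathlib

open Matrix BigOperators

/-- Membership in the subspace `W_a` attached to the `a`-th mutually unbiased basis:
real traceless combinations of the rank-one projectors onto the basis states. -/
def mubW (d : ℕ) (ψ : Fin (d + 1) → Fin d → (Fin d → ℂ)) (a : Fin (d + 1))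
    (X : Matrix (Fin d) (Fin d) ℂ) : Prop :=
  ∃ r : Fin d → ℝ, (∑ b, r b) = 0 ∧
    X = ∑ b, (r b : ℂ) • Matrix.vecMulVec (ψ a b) (star (ψ a b))

namespace MubAux

variable {d : ℕ}

/-- The rank-one projector onto the `b`-th vector of the `a`-th basis. -/
noncomputable def P (ψ : Fin (d + 1) → Fin d → (Fin d → ℂ)) (a : Fin (d + 1)) (b : Fin d) :
    Matrix (Fin d) (Fin d) ℂ :=
  Matrix.vecMulVec (ψ a b) (star (ψ a b))

lemma mubW_iff (ψ : Fin (d + 1) → Fin d → (Fin d → ℂ)) (a : Fin (d + 1))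
    (X : Matrix (Fin d) (Fin d) ℂ) :
    mubW d ψ a X ↔ ∃ r : Fin d → ℝ, (∑ b, r b) = 0 ∧ X = ∑ b, (r b : ℂ) • P ψ a b :=
  Iff.rfl

lemma trace_vmv (u v : Fin d → ℂ) : (Matrix.vecMulVec u v).trace = u ⬝ᵥ v := by
  simp [Matrix.trace, Matrix.diag, Matrix.vecMulVec_apply, dotProduct]

lemma mul_vmv (u v w z : Fin d → ℂ) :
    Matrix.vecMulVec u v * Matrix.vecMulVec w z = (v ⬝ᵥ w) • Matrix.vecMulVec u z := by
  ext i j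
  simp only [Matrix.mul_apply, Matrix.vecMulVec_apply, Matrix.smul_apply, smul_eq_mul,
    dotProduct, Finset.sum_mul]
  exact Finset.sum_congr rfl fun k _ => by ring

section withMUB

variable (ψ : Fin (d + 1) → Fin d → (Fin d → ℂ))

lemma ip_self
    (hMUB : ∀ a b a' b', ‖star (ψ a b) ⬝ᵥ ψ a' b'‖ =
      if a = a' ∧ b = b' then 1 else if a = a' then 0 else 1 / Real.sqrt d)
    (a : Fin (d + 1)) (b : Fin d) : star (ψ a b) ⬝ᵥ ψ a b = 1 := by
  have h1 := hMUB a b a b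
  simp only [and_self, if_true] at h1
  have h2 : star (ψ a b) ⬝ᵥ ψ a b = ((∑ i, Complex.normSq (ψ a b i) : ℝ) : ℂ) := by
    push_cast
    refine Finset.sum_congr rfl fun i _ => ?_
    simp [Complex.normSq_eq_conj_mul_self]
  rw [h2] at h1 ⊢
  rw [Complex.norm_real, Real.norm_of_nonneg (Finset.sum_nonneg fun i _ => Complex.normSq_nonneg _)] at h1
  rw [h1, Complex.ofReal_one]

lemma ip_orth
    (hMUB : ∀ a b a' b', ‖star (ψ a b) ⬝ᵥ ψ a' b'‖ =
      if a = a' ∧ b = b' then 1 else if a = a' then 0 else 1 / Real.sqrt d)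
    (a : Fin (d + 1)) {b b' : Fin d} (h : b ≠ b') : star (ψ a b) ⬝ᵥ ψ a b' = 0 := by
  have h1 := hMUB a b a b'
  simp only [h, and_false, if_false, if_true, eq_self_iff_true] at h1
  exact norm_eq_zero.mp h1

lemma trace_P
    (hMUB : ∀ a b a' b', ‖star (ψ a b) ⬝ᵥ ψ a' b'‖ =
      if a = a' ∧ b = b' then 1 else if a = a' then 0 else 1 / Real.sqrt d)
    (a : Fin (d + 1)) (b : Fin d) : (P ψ a b).trace = 1 := by
  rw [P, trace_vmv, dotProduct_comm]
  exact ip_self ψ hMUB a b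

lemma trace_P_mul
    (hMUB : ∀ a b a' b', ‖star (ψ a b) ⬝ᵥ ψ a' b'‖ =
      if a = a' ∧ b = b' then 1 else if a = a' then 0 else 1 / Real.sqrt d)
    (a a' : Fin (d + 1)) (b b' : Fin d) :
    (P ψ a b * P ψ a' b').trace =
      if a = a' then (if b = b' then (1 : ℂ) else 0) else ((d : ℂ))⁻¹ := by
  have h1 : ψ a b ⬝ᵥ star (ψ a' b') = (starRingEnd ℂ) (star (ψ a b) ⬝ᵥ ψ a' b') := by
    simp [dotProduct, map_sum, mul_comm]
  have key : (P ψ a b * P ψ a' b').trace =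
      ((‖star (ψ a b) ⬝ᵥ ψ a' b'‖ ^ 2 : ℝ) : ℂ) := by
    rw [P, P, mul_vmv, Matrix.trace_smul, trace_vmv, h1, smul_eq_mul, Complex.mul_conj,
      Complex.sq_norm]
  rw [key, hMUB a b a' b']
  by_cases ha : a = a'
  · by_cases hb : b = b'
    · simp [ha, hb]
    · simp [ha, hb]
  · have hcond : ¬(a = a' ∧ b = b') := fun h => ha h.1
    simp only [ha, hcond, false_and, if_false]
    rw [div_pow, one_pow, Real.sq_sqrt (by positivity : (0:ℝ) ≤ (d:ℝ))]
    push_cast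
    rw [one_div]

lemma sum_P
    (hMUB : ∀ a b a' b', ‖star (ψ a b) ⬝ᵥ ψ a' b'‖ =
      if a = a' ∧ b = b' then 1 else if a = a' then 0 else 1 / Real.sqrt d)
    (a : Fin (d + 1)) : ∑ b, P ψ a b = 1 := by
  classical
  set V : Matrix (Fin d) (Fin d) ℂ := Matrix.of (fun i b => ψ a b i) with hV
  have h1 : Vᴴ * V = 1 := by
    ext b b'
    simp only [Matrix.mul_apply, Matrix.conjTranspose_apply, hV, Matrix.of_apply]
    by_cases h : b = b'
    · subst h
      have := ip_self ψ hMUB a b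
      simpa [Matrix.one_apply, dotProduct] using this
    · have := ip_orth ψ hMUB a h
      simpa [Matrix.one_apply, h, dotProduct] using this
  have h2 : V * Vᴴ = 1 := mul_eq_one_comm.mp h1
  have h3 : ∑ b, P ψ a b = V * Vᴴ := by
    ext i j
    simp [P, Matrix.sum_apply, Matrix.vecMulVec_apply, Matrix.mul_apply,
      Matrix.conjTranspose_apply, hV]
  rw [h3, h2]

/-- The linear map sending coefficients to the corresponding combination of projectors. -/
noncomputable def L (ψ : Fin (d + 1) → Fin d → (Fin d → ℂ)) :
    (Fin (d + 1) → Fin d → ℂ) →ₗ[ℂ] Matrix (Fin d) (Fin d) ℂ where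
  toFun z := ∑ a, ∑ b, z a b • P ψ a b
  map_add' x y := by
    simp [add_smul, Finset.sum_add_distrib]
  map_smul' c x := by
    simp [Finset.smul_sum, smul_smul]

lemma mem_ker
    (hMUB : ∀ a b a' b', ‖star (ψ a b) ⬝ᵥ ψ a' b'‖ =
      if a = a' ∧ b = b' then 1 else if a = a' then 0 else 1 / Real.sqrt d)
    (hd : d ≠ 0) (z : Fin (d + 1) → Fin d → ℂ)
    (hz : (∑ a, ∑ b, z a b • P ψ a b) = 0) :
    ∃ u : Fin (d + 1) → ℂ, (∑ a, u a) = 0 ∧ z = fun a _ => u a := by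
  classical
  have hdC : (d : ℂ) ≠ 0 := Nat.cast_ne_zero.mpr hd
  set Z : Fin (d + 1) → ℂ := fun a => ∑ b, z a b with hZ
  have key : ∀ (a' : Fin (d + 1)) (b' : Fin d),
      z a' b' + (∑ a ∈ Finset.univ.erase a', Z a) * (d : ℂ)⁻¹ = 0 := by
    intro a' b'
    have h0 : (P ψ a' b' * (∑ a, ∑ b, z a b • P ψ a b)).trace = 0 := by
      rw [hz, mul_zero, Matrix.trace_zero]
    rw [Matrix.mul_sum] at h0
    simp only [Matrix.mul_sum, Matrix.mul_smul, Matrix.trace_sum, Matrix.trace_smul,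
      smul_eq_mul] at h0
    have hin : ∀ a : Fin (d + 1), (∑ b, z a b * (P ψ a' b' * P ψ a b).trace) =
        if a' = a then z a' b' else Z a * (d : ℂ)⁻¹ := by
      intro a
      by_cases ha : a' = a
      · subst ha
        simp only [if_true]
        have : ∀ b : Fin d, z a' b * (P ψ a' b' * P ψ a' b).trace =
            if b' = b then z a' b else 0 := by
          intro b
          rw [trace_P_mul ψ hMUB]
          simp only [if_pos rfl]
          by_cases hb : b' = b
          · simp [hb]
          · simp [hb, fun h : b = b' => hb h.symm]
        rw [Finset.sum_congr rfl fun b _ => this b]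
        simp
      · simp only [ha, if_false]
        have : ∀ b : Fin d, z a b * (P ψ a' b' * P ψ a b).trace = z a b * (d : ℂ)⁻¹ := by
          intro b
          rw [trace_P_mul ψ hMUB, if_neg ha]
        rw [Finset.sum_congr rfl fun b _ => this b, ← Finset.sum_mul]
    rw [Finset.sum_congr rfl fun a _ => hin a] at h0
    rw [← Finset.add_sum_erase _ _ (Finset.mem_univ a')] at h0
    rw [if_pos rfl] at h0
    have : ∑ a ∈ Finset.univ.erase a', (if a' = a then z a' b' else Z a * (d : ℂ)⁻¹) =
        ∑ a ∈ Finset.univ.erase a', Z a * (d : ℂ)⁻¹ := by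
      refine Finset.sum_congr rfl fun a ha => ?_
      rw [if_neg (Finset.ne_of_mem_erase ha).symm]
    rw [this, ← Finset.sum_mul] at h0
    exact h0
  have hZa : ∀ a' : Fin (d + 1), Z a' = - (∑ a ∈ Finset.univ.erase a', Z a) := by
    intro a'
    have : Z a' = ∑ b : Fin d, (-(∑ a ∈ Finset.univ.erase a', Z a) * (d : ℂ)⁻¹) := by
      rw [hZ]
      refine Finset.sum_congr rfl fun b _ => ?_
      have := key a' b
      linear_combination this
    rw [this, Finset.sum_const, Finset.card_univ, Fintype.card_fin, nsmul_eq_mul]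
    field_simp
  have hZtot : ∑ a, Z a = 0 := by
    have := hZa 0
    rw [← Finset.add_sum_erase _ _ (Finset.mem_univ (0 : Fin (d + 1)))]
    rw [this]
    ring
  refine ⟨fun a => Z a * (d : ℂ)⁻¹, ?_, ?_⟩
  · rw [← Finset.sum_mul, hZtot, zero_mul]
  · funext a b
    have h1 := key a b
    have h2 : ∑ x ∈ Finset.univ.erase a, Z x = - Z a := by
      have := hZtot
      rw [← Finset.add_sum_erase _ _ (Finset.mem_univ a)] at this
      linear_combination this
    rw [h2] at h1
    linear_combination h1

/-- The sum functional. -/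
noncomputable def sumF : (Fin (d + 1) → ℂ) →ₗ[ℂ] ℂ where
  toFun u := ∑ a, u a
  map_add' x y := by simp [Finset.sum_add_distrib]
  map_smul' c x := by simp [Finset.mul_sum]

/-- Constant-in-`b` extension. -/
def J : (Fin (d + 1) → ℂ) →ₗ[ℂ] (Fin (d + 1) → Fin d → ℂ) where
  toFun u := fun a _ => u a
  map_add' x y := rfl
  map_smul' c x := rfl

lemma finrank_ker_sumF : Module.finrank ℂ (LinearMap.ker (sumF (d := d))) = d := by
  have hsurj : Function.Surjective (sumF (d := d)) := by
    intro c
    refine ⟨Pi.single 0 c, ?_⟩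
    simp [sumF]
  have hr : LinearMap.range (sumF (d := d)) = ⊤ := LinearMap.range_eq_top.mpr hsurj
  have := LinearMap.finrank_range_add_finrank_ker (sumF (d := d))
  rw [hr, finrank_top, Module.finrank_self, Module.finrank_fintype_fun_eq_card,
    Fintype.card_fin] at this
  omega

lemma finrank_kerL_le
    (hMUB : ∀ a b a' b', ‖star (ψ a b) ⬝ᵥ ψ a' b'‖ =
      if a = a' ∧ b = b' then 1 else if a = a' then 0 else 1 / Real.sqrt d)
    (hd : d ≠ 0) : Module.finrank ℂ (LinearMap.ker (L ψ)) ≤ d := by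
  have h1 : LinearMap.ker (L ψ) ≤ Submodule.map (J (d := d)) (LinearMap.ker (sumF (d := d))) := by
    intro z hz
    obtain ⟨u, hu0, hu⟩ := mem_ker ψ hMUB hd z hz
    exact ⟨u, hu0, hu.symm⟩
  calc Module.finrank ℂ (LinearMap.ker (L ψ))
      ≤ Module.finrank ℂ (Submodule.map (J (d := d)) (LinearMap.ker (sumF (d := d)))) :=
        Submodule.finrank_mono h1
    _ ≤ Module.finrank ℂ (LinearMap.ker (sumF (d := d))) := Submodule.finrank_map_le _ _
    _ = d := finrank_ker_sumF

lemma L_surj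
    (hMUB : ∀ a b a' b', ‖star (ψ a b) ⬝ᵥ ψ a' b'‖ =
      if a = a' ∧ b = b' then 1 else if a = a' then 0 else 1 / Real.sqrt d)
    (hd : d ≠ 0) : Function.Surjective (L ψ) := by
  have hrn := LinearMap.finrank_range_add_finrank_ker (L ψ)
  have hdom : Module.finrank ℂ (Fin (d + 1) → Fin d → ℂ) = (d + 1) * d := by
    rw [Module.finrank_pi_fintype]
    simp [Module.finrank_fintype_fun_eq_card]
  have hM : Module.finrank ℂ (Matrix (Fin d) (Fin d) ℂ) = d * d := by
    rw [Module.finrank_matrix]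
    simp
  rw [hdom] at hrn
  have hker := finrank_kerL_le ψ hMUB hd
  have hle : Module.finrank ℂ (LinearMap.range (L ψ)) ≤ d * d := by
    rw [← hM]; exact Submodule.finrank_le _
  have heq : Module.finrank ℂ (LinearMap.range (L ψ)) =
      Module.finrank ℂ (Matrix (Fin d) (Fin d) ℂ) := by
    rw [hM]; nlinarith
  rw [← LinearMap.range_eq_top]
  exact Submodule.eq_top_of_finrank_eq heq

lemma trace_mul_expand (a a' : Fin (d + 1)) (rr s : Fin d → ℂ) :
    ((∑ b, rr b • P ψ a b) * (∑ b, s b • P ψ a' b)).trace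
      = ∑ b, ∑ b', rr b * s b' * (P ψ a b * P ψ a' b').trace := by
  rw [Finset.sum_mul_sum]
  simp only [Matrix.trace_sum, smul_mul_assoc, mul_smul_comm, Matrix.trace_smul, smul_eq_mul]
  exact Finset.sum_congr rfl fun b _ => Finset.sum_congr rfl fun b' _ => by ring

lemma part1
    (hMUB : ∀ a b a' b', ‖star (ψ a b) ⬝ᵥ ψ a' b'‖ =
      if a = a' ∧ b = b' then 1 else if a = a' then 0 else 1 / Real.sqrt d)
    (a a' : Fin (d + 1)) (h : a ≠ a') (X Y : Matrix (Fin d) (Fin d) ℂ)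
    (hX : mubW d ψ a X) (hY : mubW d ψ a' Y) : (X * Y).trace = 0 := by
  rw [mubW_iff] at hX hY
  obtain ⟨rr, hr0, rfl⟩ := hX
  obtain ⟨s, hs0, rfl⟩ := hY
  rw [trace_mul_expand]
  have step : ∀ b b' : Fin d, (rr b : ℂ) * (s b' : ℂ) * (P ψ a b * P ψ a' b').trace
      = (rr b : ℂ) * (s b' : ℂ) * (d : ℂ)⁻¹ := by
    intro b b'
    rw [trace_P_mul ψ hMUB, if_neg h]
  rw [Finset.sum_congr rfl fun b _ => Finset.sum_congr rfl fun b' _ => step b b']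
  have hr0' : (∑ b, (rr b : ℂ)) = 0 := by exact_mod_cast hr0
  have : ∑ b, ∑ b', (rr b : ℂ) * (s b' : ℂ) * (d : ℂ)⁻¹
      = (∑ b, (rr b : ℂ)) * ((∑ b', (s b' : ℂ)) * (d : ℂ)⁻¹) := by
    simp only [Finset.sum_mul, Finset.mul_sum]
    rw [Finset.sum_comm]
    exact Finset.sum_congr rfl fun b _ => Finset.sum_congr rfl fun b' _ => by ring
  rw [this, hr0', zero_mul]

lemma unique_decomp
    (hMUB : ∀ a b a' b', ‖star (ψ a b) ⬝ᵥ ψ a' b'‖ =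
      if a = a' ∧ b = b' then 1 else if a = a' then 0 else 1 / Real.sqrt d)
    (X : Matrix (Fin d) (Fin d) ℂ) (f g : Fin (d + 1) → Matrix (Fin d) (Fin d) ℂ)
    (hf1 : ∀ a, mubW d ψ a (f a)) (hf2 : X = ∑ a, f a)
    (hg1 : ∀ a, mubW d ψ a (g a)) (hg2 : X = ∑ a, g a) : f = g := by
  classical
  have hdiffm : ∀ a, mubW d ψ a (f a - g a) := by
    intro a
    obtain ⟨p, hp, hpe⟩ := hf1 a
    obtain ⟨q, hq, hqe⟩ := hg1 a
    refine ⟨fun b => p b - q b, by rw [Finset.sum_sub_distrib, hp, hq, sub_zero], ?_⟩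
    rw [hpe, hqe, ← Finset.sum_sub_distrib]
    refine Finset.sum_congr rfl fun b _ => ?_
    push_cast
    rw [sub_smul]
  have hzero : ∑ a, (f a - g a) = 0 := by
    rw [Finset.sum_sub_distrib, ← hf2, ← hg2, sub_self]
  funext a'
  have htr : ((f a' - g a') * (f a' - g a')).trace = 0 := by
    have h0 : ((f a' - g a') * (∑ a, (f a - g a))).trace = 0 := by
      rw [hzero, mul_zero, Matrix.trace_zero]
    rw [Matrix.mul_sum, Matrix.trace_sum] at h0
    have hsingle : ∑ a, ((f a' - g a') * (f a - g a)).trace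
        = ((f a' - g a') * (f a' - g a')).trace :=
      Finset.sum_eq_single a'
        (fun a _ hne => part1 ψ hMUB a' a (Ne.symm hne) _ _ (hdiffm a') (hdiffm a))
        (fun h => absurd (Finset.mem_univ a') h)
    rw [hsingle] at h0
    exact h0
  obtain ⟨t, ht0, hte⟩ := (mubW_iff ψ a' _).mp (hdiffm a')
  rw [hte, trace_mul_expand] at htr
  have step : ∀ b b' : Fin d, (t b : ℂ) * (t b' : ℂ) * (P ψ a' b * P ψ a' b').trace
      = if b = b' then (t b : ℂ) * (t b' : ℂ) else 0 := by
    intro b b'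
    rw [trace_P_mul ψ hMUB, if_pos rfl]
    by_cases hb : b = b' <;> simp [hb]
  rw [Finset.sum_congr rfl fun b _ => Finset.sum_congr rfl fun b' _ => step b b'] at htr
  simp only [Finset.sum_ite_eq, Finset.mem_univ, if_true] at htr
  have hreal : ∑ b, (t b) ^ 2 = (0 : ℝ) := by
    have hc : ((∑ b, (t b) ^ 2 : ℝ) : ℂ) = 0 := by
      push_cast
      rw [← htr]
      exact Finset.sum_congr rfl fun b _ => by ring
    exact_mod_cast hc
  have hall := (Finset.sum_eq_zero_iff_of_nonneg (fun b _ => sq_nonneg (t b))).mp hreal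
  have hfg : f a' - g a' = 0 := by
    rw [hte]
    refine Finset.sum_eq_zero fun b _ => ?_
    have hb : t b = 0 := by
      have := hall b (Finset.mem_univ b)
      exact pow_eq_zero_iff (two_ne_zero) |>.mp this
    simp [hb]
  exact sub_eq_zero.mp hfg

lemma exists_decomp
    (hMUB : ∀ a b a' b', ‖star (ψ a b) ⬝ᵥ ψ a' b'‖ =
      if a = a' ∧ b = b' then 1 else if a = a' then 0 else 1 / Real.sqrt d)
    (hd : d ≠ 0) (X : Matrix (Fin d) (Fin d) ℂ) (hX : X.IsHermitian) (ht : X.trace = 0) :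
    ∃ f : Fin (d + 1) → Matrix (Fin d) (Fin d) ℂ,
      (∀ a, mubW d ψ a (f a)) ∧ X = ∑ a, f a := by
  have hdR : (d : ℝ) ≠ 0 := Nat.cast_ne_zero.mpr hd
  obtain ⟨z, hz⟩ := L_surj ψ hMUB hd X
  have hz' : (∑ a, ∑ b, z a b • P ψ a b) = X := hz
  have hPH : ∀ a b, (P ψ a b)ᴴ = P ψ a b := by
    intro a b
    ext i j
    simp [P, Matrix.conjTranspose_apply, Matrix.vecMulVec_apply, mul_comm]
  have hconj : X = ∑ a, ∑ b, (starRingEnd ℂ) (z a b) • P ψ a b := by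
    calc X = Xᴴ := hX.symm
    _ = (∑ a, ∑ b, z a b • P ψ a b)ᴴ := by rw [hz']
    _ = ∑ a, ∑ b, (starRingEnd ℂ) (z a b) • P ψ a b := by
        simp only [Matrix.conjTranspose_sum, Matrix.conjTranspose_smul]
        exact Finset.sum_congr rfl fun a _ => Finset.sum_congr rfl fun b _ => by rw [hPH, starRingEnd_apply]
  set r : Fin (d + 1) → Fin d → ℝ := fun a b => (z a b).re with hrdef
  have hr : X = ∑ a, ∑ b, ((r a b : ℝ) : ℂ) • P ψ a b := by
    have h2 : (2 : ℂ) • X = (2 : ℂ) • ∑ a, ∑ b, ((r a b : ℝ) : ℂ) • P ψ a b := by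
      calc (2 : ℂ) • X = X + X := two_smul ℂ X
      _ = (∑ a, ∑ b, z a b • P ψ a b) + ∑ a, ∑ b, (starRingEnd ℂ) (z a b) • P ψ a b := by
          rw [hz']
          exact congrArg _ hconj
      _ = ∑ a, ∑ b, (z a b + (starRingEnd ℂ) (z a b)) • P ψ a b := by
          rw [← Finset.sum_add_distrib]
          exact Finset.sum_congr rfl fun a _ => by
            rw [← Finset.sum_add_distrib]
            exact Finset.sum_congr rfl fun b _ => (add_smul _ _ _).symm
      _ = ∑ a, ∑ b, ((2 : ℂ) * ((r a b : ℝ) : ℂ)) • P ψ a b := by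
          refine Finset.sum_congr rfl fun a _ => Finset.sum_congr rfl fun b _ => ?_
          rw [Complex.add_conj]
          congr 1
          push_cast
          ring
      _ = (2 : ℂ) • ∑ a, ∑ b, ((r a b : ℝ) : ℂ) • P ψ a b := by
          rw [Finset.smul_sum]
          exact Finset.sum_congr rfl fun a _ => by
            rw [Finset.smul_sum]
            exact Finset.sum_congr rfl fun b _ => (smul_smul _ _ _).symm
    exact smul_right_injective (Matrix (Fin d) (Fin d) ℂ) (two_ne_zero) h2
  set T : Fin (d + 1) → ℝ := fun a => ∑ b, r a b with hTdef
  have hT : ∑ a, T a = 0 := by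
    have h1 : X.trace = ∑ a, ∑ b, ((r a b : ℝ) : ℂ) := by
      rw [hr]
      simp only [Matrix.trace_sum, Matrix.trace_smul, smul_eq_mul]
      exact Finset.sum_congr rfl fun a _ => Finset.sum_congr rfl fun b _ => by
        rw [trace_P ψ hMUB, mul_one]
    rw [ht] at h1
    have hc : ((∑ a, T a : ℝ) : ℂ) = 0 := by
      simp only [hTdef]
      push_cast
      exact h1.symm
    exact_mod_cast hc
  refine ⟨fun a => ∑ b, ((r a b - T a / d : ℝ) : ℂ) • P ψ a b, fun a => ?_, ?_⟩
  · rw [mubW_iff]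
    refine ⟨fun b => r a b - T a / d, ?_, rfl⟩
    rw [Finset.sum_sub_distrib, Finset.sum_const, Finset.card_univ, Fintype.card_fin,
      nsmul_eq_mul]
    have hTa : ∑ b, r a b = T a := rfl
    rw [hTa]
    field_simp
    ring
  · have expand : ∀ a, ∑ b, ((r a b - T a / d : ℝ) : ℂ) • P ψ a b
        = (∑ b, ((r a b : ℝ) : ℂ) • P ψ a b)
          - ((T a / d : ℝ) : ℂ) • (1 : Matrix (Fin d) (Fin d) ℂ) := by
      intro a
      rw [← sum_P ψ hMUB a, Finset.smul_sum, ← Finset.sum_sub_distrib]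
      refine Finset.sum_congr rfl fun b _ => ?_
      push_cast
      rw [sub_smul]
    rw [Finset.sum_congr rfl fun a _ => expand a, Finset.sum_sub_distrib, ← hr]
    have h5 : ∑ a, ((T a / d : ℝ) : ℂ) • (1 : Matrix (Fin d) (Fin d) ℂ)
        = ((∑ a, T a / d : ℝ) : ℂ) • (1 : Matrix (Fin d) (Fin d) ℂ) := by
      rw [← Finset.sum_smul]
      congr 1
      push_cast
      rfl
    rw [h5, ← Finset.sum_div, hT, zero_div, Complex.ofReal_zero, zero_smul, sub_zero]

end withMUB


end MubAux

theorem mubW_orthogonal_and_directSum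
    (d : ℕ) (ψ : Fin (d + 1) → Fin d → (Fin d → ℂ))
    (hMUB : ∀ a b a' b', ‖star (ψ a b) ⬝ᵥ ψ a' b'‖ =
      if a = a' ∧ b = b' then 1 else if a = a' then 0 else 1 / Real.sqrt d) :
    (∀ a a' : Fin (d + 1), a ≠ a' →
      ∀ X Y : Matrix (Fin d) (Fin d) ℂ, mubW d ψ a X → mubW d ψ a' Y →
        (X * Y).trace = 0) ∧
    (∀ X : Matrix (Fin d) (Fin d) ℂ, X.IsHermitian → X.trace = 0 →
      ∃! f : Fin (d + 1) → Matrix (Fin d) (Fin d) ℂ,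
        (∀ a, mubW d ψ a (f a)) ∧ X = ∑ a, f a) := by
  constructor
  · exact fun a a' h X Y hX hY => MubAux.part1 ψ hMUB a a' h X Y hX hY
  · intro X hX ht
    by_cases hd : d = 0
    · subst hd
      refine ⟨fun _ => 0, ⟨fun a => ⟨fun b => 0, by simp, by ext i j; exact i.elim0⟩, ?_⟩, ?_⟩
      · ext i j
        exact i.elim0
      · intro g hg
        funext a
        ext i j
        exact i.elim0
    · obtain ⟨f, hf1, hf2⟩ := MubAux.exists_decomp ψ hMUB hd X hX ht
      exact ⟨f, ⟨hf1, hf2⟩, fun g hg => MubAux.unique_decomp ψ hMUB X g f hg.1 hg.2 hf1 hf2⟩
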